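/- For all real numbers α > 2, c > 0 and ρ ≥ 1, the function r ↦ (1 − exp(−c r^{−α})) r is integrable on [ρ, ∞), and ∫_ρ^∞ (1 − exp(−c r^{−α})) r dr = (1/2) [ c^{2/α} γ(1 − 2/α, c ρ^{−α}) − ρ² (1 − exp(−c ρ^{−α})) ]. (This is the integral evaluation underlying the Laplace transform of the received power from far power beacons in Lemma 4, case 1 < ρ < ∞.) -/

import Mathlib

open MeasureTheory Set Filter intervalIntegral Real Topology

/-- The lower incomplete gamma function γ(s, x) = ∫_0^x t^(s-1) e^(-t) dt. -/
noncomputable def lowerGamma (s x : ℝ) : ℝ := ∫ t in (0:ℝ)..x, t ^ (s - 1) * Real.exp (-t)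

lemma lg_intable {s : ℝ} (hs : 0 < s) (a b : ℝ) :
    IntervalIntegrable (fun u : ℝ => u ^ (s - 1) * Real.exp (-u)) volume a b := by
  have h1 : IntervalIntegrable (fun u : ℝ => u ^ (s - 1)) volume a b :=
    intervalIntegrable_rpow' (by linarith)
  exact h1.mul_continuousOn ((Real.continuous_exp.comp continuous_neg).continuousOn)

lemma lg_hasDerivAt {s : ℝ} (hs : 0 < s) {x : ℝ} (hx : 0 < x) :
    HasDerivAt (lowerGamma s) (x ^ (s - 1) * Real.exp (-x)) x := by
  have hca : ∀ y ∈ Set.Ioi (0:ℝ),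
      ContinuousAt (fun u : ℝ => u ^ (s - 1) * Real.exp (-u)) y := fun y hy =>
    (Real.continuousAt_rpow_const y _ (Or.inl (ne_of_gt hy))).mul
      ((Real.continuous_exp.comp continuous_neg).continuousAt)
  apply intervalIntegral.integral_hasDerivAt_right (lg_intable hs 0 x)
  · exact ContinuousAt.stronglyMeasurableAtFilter isOpen_Ioi hca x hx
  · exact hca x hx

lemma lg_nonneg {s : ℝ} {x : ℝ} (hx : 0 ≤ x) : 0 ≤ lowerGamma s x := by
  apply intervalIntegral.integral_nonneg hx
  intro u hu
  exact mul_nonneg (Real.rpow_nonneg hu.1 _) (Real.exp_pos _).le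

lemma lg_le {s : ℝ} (hs : 0 < s) {x : ℝ} (hx : 0 ≤ x) : lowerGamma s x ≤ x ^ s / s := by
  have h := intervalIntegral.integral_mono_on (μ := volume)
    (f := fun u : ℝ => u ^ (s - 1) * Real.exp (-u)) (g := fun u : ℝ => u ^ (s - 1))
    hx (lg_intable hs 0 x)
    (intervalIntegrable_rpow' (by linarith))
    (fun u hu => by
      have h1 : Real.exp (-u) ≤ 1 := Real.exp_le_one_iff.2 (by simpa using hu.1)
      calc u ^ (s - 1) * Real.exp (-u) ≤ u ^ (s - 1) * 1 :=
            mul_le_mul_of_nonneg_left h1 (Real.rpow_nonneg hu.1 _)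
        _ = u ^ (s - 1) := mul_one _)
  have h2 : ∫ u in (0:ℝ)..x, u ^ (s - 1) = x ^ s / s := by
    rw [integral_rpow (Or.inl (by linarith))]
    rw [Real.zero_rpow (by linarith : s - 1 + 1 ≠ 0)]
    ring_nf
  rw [← h2]
  exact h

lemma lg_tendsto {s : ℝ} (hs : 0 < s) :
    Tendsto (lowerGamma s) (𝓝[>] (0:ℝ)) (𝓝 0) := by
  apply squeeze_zero' (g := fun x => x ^ s / s)
  · filter_upwards [self_mem_nhdsWithin] with x hx
    exact lg_nonneg (le_of_lt hx)
  · filter_upwards [self_mem_nhdsWithin] with x hx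
    exact lg_le hs (le_of_lt hx)
  · have : Tendsto (fun x : ℝ => x ^ s) (𝓝[>] (0:ℝ)) (𝓝 0) := by
      have h := (Real.continuousAt_rpow_const 0 s (Or.inr hs.le)).continuousWithinAt
        (s := Set.Ioi (0:ℝ))
      simpa [ContinuousWithinAt, Real.zero_rpow hs.ne'] using h
    simpa using this.div_const s

theorem stmt_1 (α c ρ : ℝ) (hα : 2 < α) (hc : 0 < c) (hρ : 1 ≤ ρ) :
    MeasureTheory.IntegrableOn (fun r : ℝ => (1 - Real.exp (-c * r ^ (-α))) * r)
      (Set.Ici ρ) ∧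
    ∫ r in Set.Ici ρ, (1 - Real.exp (-c * r ^ (-α))) * r =
      (1/2) * (c ^ (2/α) * lowerGamma (1 - 2/α) (c * ρ ^ (-α)) -
        ρ ^ 2 * (1 - Real.exp (-c * ρ ^ (-α)))) := by
  have hα0 : (0:ℝ) < α := by linarith
  set s : ℝ := 1 - 2/α with hs_def
  have h2α : 0 < 2/α := by positivity
  have h2α1 : 2/α < 1 := by rw [div_lt_one hα0]; linarith
  have hs : 0 < s := by simp only [hs_def]; linarith
  set G : ℝ → ℝ := fun r => r ^ 2 / 2 * (1 - Real.exp (-(c * r ^ (-α)))) -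
      c ^ (2/α) / 2 * lowerGamma s (c * r ^ (-α)) with hG_def
  -- derivative
  have hderiv : ∀ r ∈ Set.Ici ρ, HasDerivAt G ((1 - Real.exp (-c * r ^ (-α))) * r) r := by
    intro r hr
    have hr0 : (0:ℝ) < r := lt_of_lt_of_le one_pos (le_trans hρ hr)
    have ht0 : 0 < c * r ^ (-α) := by positivity
    have h1 : HasDerivAt (fun x : ℝ => x ^ (-α)) (-α * r ^ (-α - 1)) r :=
      Real.hasDerivAt_rpow_const (Or.inl hr0.ne')
    have ht : HasDerivAt (fun x : ℝ => c * x ^ (-α)) (c * (-α * r ^ (-α - 1))) r :=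
      h1.const_mul c
    have hexp : HasDerivAt (fun x : ℝ => 1 - Real.exp (-(c * x ^ (-α))))
        (Real.exp (-(c * r ^ (-α))) * (c * (-α * r ^ (-α - 1)))) r := by
      have := (ht.neg).exp
      have h2 := (hasDerivAt_const r (1:ℝ)).sub this
      exact h2.congr_deriv (by simp only [Pi.neg_apply]; ring)
    have hsq : HasDerivAt (fun x : ℝ => x ^ 2 / 2) r r := by
      have := (hasDerivAt_pow 2 r).div_const 2
      exact this.congr_deriv (by push_cast; ring)
    have hA : HasDerivAt (fun x : ℝ => x ^ 2 / 2 * (1 - Real.exp (-(c * x ^ (-α)))))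
        (r * (1 - Real.exp (-(c * r ^ (-α)))) +
          r ^ 2 / 2 * (Real.exp (-(c * r ^ (-α))) * (c * (-α * r ^ (-α - 1))))) r :=
      hsq.mul hexp
    have hγ := (lg_hasDerivAt hs ht0).comp r ht
    have hB : HasDerivAt (fun x : ℝ => c ^ (2/α) / 2 * lowerGamma s (c * x ^ (-α)))
        (c ^ (2/α) / 2 * ((c * r ^ (-α)) ^ (s - 1) * Real.exp (-(c * r ^ (-α))) *
          (c * (-α * r ^ (-α - 1))))) r := hγ.const_mul _
    have key : c ^ (2/α) * (c * r ^ (-α)) ^ (s - 1) = r ^ 2 := by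
      have hs1 : s - 1 = -(2/α) := by simp [hs_def]
      rw [hs1, Real.mul_rpow hc.le (Real.rpow_nonneg hr0.le _),
        ← Real.rpow_natCast r 2, ← Real.rpow_mul hr0.le, ← mul_assoc,
        ← Real.rpow_add hc]
      have e1 : 2/α + -(2/α) = 0 := by ring
      have e2 : -α * -(2/α) = 2 := by field_simp
      rw [e1, e2, Real.rpow_zero, one_mul]
      norm_num
    have htot := hA.sub hB
    refine htot.congr_deriv ?_
    symm
    have hEq : c ^ (2/α) / 2 * ((c * r ^ (-α)) ^ (s - 1) * Real.exp (-(c * r ^ (-α))) *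
          (c * (-α * r ^ (-α - 1)))) =
        r ^ 2 / 2 * (Real.exp (-(c * r ^ (-α))) * (c * (-α * r ^ (-α - 1)))) := by
      rw [show c ^ (2/α) / 2 * ((c * r ^ (-α)) ^ (s - 1) * Real.exp (-(c * r ^ (-α))) *
          (c * (-α * r ^ (-α - 1)))) = (c ^ (2/α) * (c * r ^ (-α)) ^ (s - 1)) / 2 *
          (Real.exp (-(c * r ^ (-α))) * (c * (-α * r ^ (-α - 1)))) by ring, key]
    rw [hEq, neg_mul]
    ring
  -- nonnegativity
  have hpos : ∀ r ∈ Set.Ioi ρ, 0 ≤ (1 - Real.exp (-c * r ^ (-α))) * r := by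
    intro r hr
    have hr0 : (0:ℝ) < r := lt_of_lt_of_le one_pos (le_trans hρ (le_of_lt hr))
    have : Real.exp (-c * r ^ (-α)) ≤ 1 := by
      apply Real.exp_le_one_iff.2
      have : 0 ≤ c * r ^ (-α) := by positivity
      linarith [this]
    have h1 : 0 ≤ 1 - Real.exp (-c * r ^ (-α)) := by linarith
    exact mul_nonneg h1 hr0.le
  -- limit at infinity
  have htends : Tendsto G atTop (𝓝 0) := by
    have hpart1 : Tendsto (fun r : ℝ => r ^ 2 / 2 * (1 - Real.exp (-(c * r ^ (-α)))))
        atTop (𝓝 0) := by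
      apply squeeze_zero' (g := fun r : ℝ => c / 2 * r ^ (2 - α))
      · filter_upwards [eventually_ge_atTop (1:ℝ)] with r hr
        have hr0 : (0:ℝ) < r := lt_of_lt_of_le one_pos hr
        have : Real.exp (-(c * r ^ (-α))) ≤ 1 := by
          apply Real.exp_le_one_iff.2
          have : 0 ≤ c * r ^ (-α) := by positivity
          linarith
        have h1 : 0 ≤ 1 - Real.exp (-(c * r ^ (-α))) := by linarith
        positivity
      · filter_upwards [eventually_ge_atTop (1:ℝ)] with r hr
        have hr0 : (0:ℝ) < r := lt_of_lt_of_le one_pos hr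
        have hle : 1 - Real.exp (-(c * r ^ (-α))) ≤ c * r ^ (-α) := by
          have := Real.add_one_le_exp (-(c * r ^ (-α)))
          linarith
        have hmul : r ^ 2 / 2 * (1 - Real.exp (-(c * r ^ (-α)))) ≤
            r ^ 2 / 2 * (c * r ^ (-α)) := by
          apply mul_le_mul_of_nonneg_left hle (by positivity)
        have hEq : r ^ 2 / 2 * (c * r ^ (-α)) = c / 2 * r ^ (2 - α) := by
          rw [← Real.rpow_natCast r 2, show (2:ℝ) - α = (2:ℕ) + (-α) by push_cast; ring,
            Real.rpow_add hr0]
          ring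
        linarith [hmul, hEq.ge]
      · have := (tendsto_rpow_neg_atTop (show (0:ℝ) < α - 2 by linarith)).const_mul (c/2)
        simpa [show -(α - 2) = 2 - α by ring] using this
    have httend : Tendsto (fun r : ℝ => c * r ^ (-α)) atTop (𝓝[>] (0:ℝ)) := by
      rw [tendsto_nhdsWithin_iff]
      constructor
      · have := (tendsto_rpow_neg_atTop hα0).const_mul c
        simpa using this
      · filter_upwards [eventually_ge_atTop (1:ℝ)] with r hr
        have hr0 : (0:ℝ) < r := lt_of_lt_of_le one_pos hr
        exact Set.mem_Ioi.2 (by positivity)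
    have hpart2 : Tendsto (fun r : ℝ => c ^ (2/α) / 2 * lowerGamma s (c * r ^ (-α)))
        atTop (𝓝 0) := by
      have := ((lg_tendsto hs).comp httend).const_mul (c ^ (2/α) / 2)
      simpa using this
    have := hpart1.sub hpart2
    simpa using this
  have hint := MeasureTheory.integrableOn_Ioi_deriv_of_nonneg'
    (g := G) hderiv hpos htends
  have hval := MeasureTheory.integral_Ioi_of_hasDerivAt_of_nonneg'
    (g := G) hderiv hpos htends
  constructor
  · rw [integrableOn_Ici_iff_integrableOn_Ioi]
    exact hint
  · rw [MeasureTheory.integral_Ici_eq_integral_Ioi, hval, hG_def]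
    simp only [neg_mul]
    ring
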